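/- If {Δ_1, …, Δ_l} is a reduction of a distribution Δ of Σ, then Δ ≤_Σ Δ_i for every i ∈ [1, l]. -/
import Mathlib


/-- A *distribution* of the (finite) alphabet `α`: a family of non-empty,
pairwise incomparable (under set inclusion) sub-alphabets whose union is `α`.
Its size is `comps.ncard`. -/
structure Distr (α : Type) [Fintype α] where
  comps : Set (Set α)
  comps_nonempty : ∀ S ∈ comps, S.Nonempty
  comps_cover : ∀ a : α, ∃ S ∈ comps, a ∈ S
  comps_incomp : ∀ S ∈ comps, ∀ T ∈ comps, S ≠ T → ¬ S ⊆ T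

section Defs

variable {α : Type} [Fintype α]

/-- Natural projection `P_{Σ'}`: erase from a string all symbols not in `S`. -/
noncomputable def projA (S : Set α) (s : List α) : List α :=
  s.filter fun a => @decide (a ∈ S) (Classical.propDecidable _)

/-- `L` is decomposable with respect to `Δ`:
`L = ∥_i P_{Σ_i}(L) = ⋂_i P_{Σ_i}⁻¹(P_{Σ_i}(L))`. -/
def Decomposable (L : Set (List α)) (Δ : Distr α) : Prop :=
  L = ⋂ S ∈ Δ.comps, projA S ⁻¹' (projA S '' L)

/-- The partial order `≤_Σ` on distributions: every component of `Δ` is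
contained in some component of `Δ'`. -/
def DistLE (Δ Δ' : Distr α) : Prop :=
  ∀ S ∈ Δ.comps, ∃ T ∈ Δ'.comps, S ⊆ T

/-- `P` is a *reduction* of `Δ`. -/
def IsReduction (P : Set (Distr α)) (Δ : Distr α) : Prop :=
  2 ≤ P.ncard ∧
  (∀ Δ' ∈ P, Δ'.comps.ncard < Δ.comps.ncard) ∧
  (∀ L : Set (List α), Decomposable L Δ ↔ ∀ Δ' ∈ P, Decomposable L Δ')

/-- The maximal members (under set inclusion) of a family of sets. -/
def MaximalMem {β : Type} (F : Set (Set β)) : Set (Set β) :=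
  {S | S ∈ F ∧ ∀ T ∈ F, S ⊆ T → S = T}

/-- The dependence relation `D_Δ`. -/
def DepRel (Δ : Distr α) : Set (α × α) :=
  {p | ∃ S ∈ Δ.comps, p.1 ∈ S ∧ p.2 ∈ S}

/-- The independence relation `I_Δ = Σ × Σ − D_Δ`. -/
def IndepRel (Δ : Distr α) : Set (α × α) :=
  {p | ¬ ∃ S ∈ Δ.comps, p.1 ∈ S ∧ p.2 ∈ S}

/-- `Σ' ⊑ Δ`: `Σ'` is contained in some component of `Δ`. -/
def SqSub (S : Set α) (Δ : Distr α) : Prop :=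
  ∃ T ∈ Δ.comps, S ⊆ T

/-- `Δ` is the greatest lower bound of the family `D` with respect to `≤_Σ`. -/
def IsGLBFam {l : ℕ} (D : Fin l → Distr α) (Δ : Distr α) : Prop :=
  (∀ i, DistLE Δ (D i)) ∧
  ∀ Δ''' : Distr α, (∀ i, DistLE Δ''' (D i)) → DistLE Δ''' Δ

/-- `Δ'` is *merged* from `Δ`: `Δ' ≠ (Σ)` and `Δ'` is obtained from a
partition of the components of `Δ` having at least one block of size ≥ 2 by
taking the unions over the blocks and keeping only the maximal resulting
sub-alphabets. -/
def MergedFrom (Δ' Δ : Distr α) : Prop :=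
  Δ'.comps ≠ {Set.univ} ∧
  ∃ part : Set (Set (Set α)),
    (∀ B ∈ part, B.Nonempty) ∧
    (∀ B ∈ part, B ⊆ Δ.comps) ∧
    (∀ B ∈ part, ∀ C ∈ part, B ≠ C → Disjoint B C) ∧
    (∀ S ∈ Δ.comps, ∃ B ∈ part, S ∈ B) ∧
    (∃ B ∈ part, ∃ S ∈ B, ∃ T ∈ B, S ≠ T) ∧
    Δ'.comps = MaximalMem {U : Set α | ∃ B ∈ part, U = ⋃₀ B}

/-- Membership in the search space `S_Δ`: a set of distributions merged from
`Δ` that are pairwise `≤_Σ`-incomparable. -/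
def MemS (Δ : Distr α) (P : Set (Distr α)) : Prop :=
  (∀ Δ' ∈ P, MergedFrom Δ' Δ) ∧
  ∀ Δ₁ ∈ P, ∀ Δ₂ ∈ P, Δ₁ ≠ Δ₂ → ¬ DistLE Δ₁ Δ₂

/-- The ordering `≤_Δ` on sets of distributions: every member of `Q` has a
member of `P` below it with respect to `≤_Σ`. -/
def SetLE (P Q : Set (Distr α)) : Prop :=
  ∀ Δ' ∈ Q, ∃ Δ'' ∈ P, DistLE Δ'' Δ'

/-- `[F]`: the `≤_Σ`-minimal members of a set of distributions. -/
def MinimalD (F : Set (Distr α)) : Set (Distr α) :=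
  {Δ' | Δ' ∈ F ∧ ∀ Δ'' ∈ F, DistLE Δ'' Δ' → DistLE Δ' Δ''}

/-- `Δ'` is obtained from `Δ` by merging exactly two components `S ≠ T`
(and keeping only the maximal sub-alphabets); the members of `⊥(Δ)`. -/
def MinMergedFrom (Δ' Δ : Distr α) : Prop :=
  ∃ S ∈ Δ.comps, ∃ T ∈ Δ.comps, S ≠ T ∧
    Δ'.comps = MaximalMem ((Δ.comps \ {S, T}) ∪ {S ∪ T})

/-- The set `A(Δ)` of shared symbols of a distribution. -/
def SharedSyms (Δ : Distr α) : Set α :=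
  {a | ∃ S ∈ Δ.comps, ∃ T ∈ Δ.comps, S ≠ T ∧ a ∈ S ∧ a ∈ T}

/-- The substitution of `Δ'` into the component `C` of `Δ''` yields `Δs`:
`Δs` is obtained from the components of `Δ''` other than `C` together with the
intersections `C ∩ S` for components `S` of `Δ'`, keeping only the maximal
non-empty members. -/
def SubstResult (Δ' Δ'' : Distr α) (C : Set α) (Δs : Distr α) : Prop :=
  Δs.comps =
    MaximalMem {T : Set α |
      T.Nonempty ∧ (T ∈ Δ''.comps \ {C} ∨ ∃ S ∈ Δ'.comps, T = C ∩ S)}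

/-- One swap of two adjacent symbols forming a pair in `I`. -/
def SwapStep (I : Set (α × α)) (s t : List α) : Prop :=
  ∃ (u v : List α) (a b : α),
    (a, b) ∈ I ∧ s = u ++ a :: b :: v ∧ t = u ++ b :: a :: v

/-- Trace equivalence with respect to `I`: a finite sequence of swaps of
adjacent independent symbols. -/
def TraceEquiv (I : Set (α × α)) : List α → List α → Prop :=
  Relation.ReflTransGen (SwapStep I)

/-- `L` is trace-closed with respect to `I`. -/
def TraceClosed (I : Set (α × α)) (L : Set (List α)) : Prop :=
  L = {t | ∃ s ∈ L, TraceEquiv I s t}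

/-- The map `N` determined by the enumeration `c` of the components of a
distribution: `N(a) = {i : a ∉ Σ_i}`. -/
def Nmap {n : ℕ} (c : Fin n → Set α) (a : α) : Set (Fin n) :=
  {i | a ∉ c i}

/-- A simple path from `x` to `y` in the graph `(Σ, D)`: a list of pairwise
distinct symbols, starting at `x`, ending at `y`, with consecutive symbols
related by `D`. -/
def IsSimplePath (D : Set (α × α)) (p : List α) (x y : α) : Prop :=
  p.Nodup ∧ p.head? = some x ∧ p.getLast? = some y ∧
    p.Chain' (fun a b => (a, b) ∈ D)

/-- `Cr_D(S, y)` (with `N` given by the enumeration `c`): the set of indices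
`i` such that some simple path `p` from some `x ∈ S` to `y` in `(Σ, D)`
satisfies `i ∈ ⋂_{a ∈ p.dropLast} N(a)`. -/
def CrSet {n : ℕ} (c : Fin n → Set α) (D : Set (α × α)) (S : Set α) (y : α) :
    Set (Fin n) :=
  {i | ∃ x ∈ S, ∃ p : List α,
    IsSimplePath D p x y ∧ ∀ a ∈ p.dropLast, i ∈ Nmap c a}

/-- The smallest set of distributions containing `Q` and closed under
substitution. -/
inductive SubstClosure (Q : Set (Distr α)) : Distr α → Prop
  | base (Δ' : Distr α) (h : Δ' ∈ Q) : SubstClosure Q Δ'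
  | step (Δ' Δ'' Δs : Distr α) (C : Set α)
      (h1 : SubstClosure Q Δ') (h2 : SubstClosure Q Δ'')
      (hC : C ∈ Δ''.comps) (hA : SharedSyms Δ' ⊆ C)
      (hs : SubstResult Δ' Δ'' C Δs) : SubstClosure Q Δs

end Defs

section Count

variable {α : Type} [Fintype α] [DecidableEq α]

/-- `L(Σ_j)` (with `j` 0-indexed, so the paper's exponent `j+1` is `j+2`
here): all strings containing exactly one occurrence of each `σ_i ∈ Σ_j` and
exactly `j+2` occurrences of each `σ_i ∉ Σ_j`. -/
def Lword {m : ℕ} (σ : Fin m → α) (Sj : Set α) (j : ℕ) : Set (List α) :=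
  {s | ∀ i : Fin m,
    (σ i ∈ Sj → s.count (σ i) = 1) ∧ (σ i ∉ Sj → s.count (σ i) = j + 2)}

/-- The candidate counter example `L_cand = ⋃_j L(Σ_j)`, relative to an
enumeration `c` of the components and an enumeration `σ` of the alphabet. -/
def Lcand {n m : ℕ} (c : Fin n → Set α) (σ : Fin m → α) : Set (List α) :=
  ⋃ j : Fin n, Lword σ (c j) (j : ℕ)

end Count

/-- If `P` is a reduction of `Δ`, then `Δ ≤_Σ Δ_i` for every
`Δ_i ∈ P`. -/
theorem statement_15 {α : Type} [Fintype α] (Δ : Distr α) (P : Set (Distr α))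
    (h : IsReduction P Δ) :
    ∀ Δi ∈ P, DistLE Δ Δi := by
  classical
  intro Δi hPi S hS
  by_contra hcon
  push_neg at hcon
  -- hcon : ∀ T ∈ Δi.comps, ¬ S ⊆ T
  set K : Set (List α) := {w | (∀ a ∈ w, a ∈ S) ∧ ∃ T ∈ Δi.comps,
      (∀ a ∈ S, a ∈ T → w.count a = 1) ∧ (∀ a ∈ S, a ∉ T → w.count a = 2)} with hK
  set L : Set (List α) := projA S ⁻¹' K with hL
  have hdec : Decomposable L Δ := by
    refine Set.Subset.antisymm ?_ ?_
    · intro x hx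
      refine Set.mem_iInter₂.mpr fun U hU => ?_
      exact Set.mem_preimage.mpr ⟨x, hx, rfl⟩
    · intro x hx
      obtain ⟨y, hy, hxy⟩ := Set.mem_iInter₂.mp hx S hS
      have hyK : projA S y ∈ K := hy
      show projA S x ∈ K
      rwa [← hxy]
  have hdeci : Decomposable L Δi := (h.2.2 L).mp hdec Δi hPi
  have hSfin : S.Finite := Set.toFinite S
  set t : List α := hSfin.toFinset.toList with ht
  have htmem : ∀ a, a ∈ t ↔ a ∈ S := by
    intro a; rw [ht, Finset.mem_toList, Set.Finite.mem_toFinset]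
  have htnd : t.Nodup := Finset.nodup_toList _
  have htL : t ∉ L := by
    intro htL
    have hfil : projA S t = t :=
      List.filter_eq_self.mpr (fun a ha => decide_eq_true ((htmem a).mp ha))
    rw [hL, Set.mem_preimage, hfil] at htL
    obtain ⟨-, T, hT, -, h2⟩ := htL
    obtain ⟨a, haS, haT⟩ := Set.not_subset.mp (hcon T hT)
    have h2' : t.count a = 2 := h2 a haS haT
    rw [List.count_eq_one_of_mem htnd ((htmem a).mpr haS)] at h2'
    exact absurd h2' (by norm_num)
  have htI : t ∈ ⋂ T ∈ Δi.comps, projA T ⁻¹' (projA T '' L) := by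
    refine Set.mem_iInter₂.mpr fun T hT => ?_
    have hfinST : (S \ T).Finite := Set.toFinite _
    set r : List α := hfinST.toFinset.toList with hr
    have hrmem : ∀ a, a ∈ r ↔ a ∈ S \ T := by
      intro a; rw [hr, Finset.mem_toList, Set.Finite.mem_toFinset]
    have hrnd : r.Nodup := Finset.nodup_toList _
    refine Set.mem_preimage.mpr ⟨t ++ r, ?_, ?_⟩
    · -- t ++ r ∈ L
      have hall : ∀ a ∈ t ++ r, a ∈ S := by
        intro a ha
        rcases List.mem_append.mp ha with h1 | h2
        · exact (htmem a).mp h1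
        · exact ((hrmem a).mp h2).1
      have hfil : projA S (t ++ r) = t ++ r :=
        List.filter_eq_self.mpr (fun a ha => decide_eq_true (hall a ha))
      rw [hL, Set.mem_preimage, hfil]
      refine ⟨hall, T, hT, ?_, ?_⟩
      · intro a haS haT
        rw [List.count_append, List.count_eq_one_of_mem htnd ((htmem a).mpr haS),
          List.count_eq_zero_of_not_mem (fun hmem => ((hrmem a).mp hmem).2 haT)]
      · intro a haS haT
        rw [List.count_append, List.count_eq_one_of_mem htnd ((htmem a).mpr haS),
          List.count_eq_one_of_mem hrnd ((hrmem a).mpr ⟨haS, haT⟩)]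
    · -- projA T (t ++ r) = projA T t
      show projA T (t ++ r) = projA T t
      unfold projA
      rw [List.filter_append]
      have hnil : List.filter (fun a => @decide (a ∈ T) (Classical.propDecidable _)) r = [] := by
        refine List.filter_eq_nil_iff.mpr fun a ha => ?_
        simpa using ((hrmem a).mp ha).2
      rw [hnil, List.append_nil]
  rw [hdeci] at htL
  exact htL htI
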